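/- Let X, Y be symmetric n×n matrices with X ⪯ Y. Let R22 ∈ S^{m2}, R11 ∈ S^{m1}, R12 ∈ R^{m1×m2} and B_{k1} ∈ R^{n×m1}, B_{k2} ∈ R^{n×m2} (k=1,...,r). Define R_{ij}(Z) := R_{ij} + Σ_k B_{ki}^T Z B_{kj} and R22^♯(Z) := R11(Z) - R12(Z) R22(Z)^{-1} R12(Z)^T. If R22(X) ≻ 0, R22(Y) ≻ 0, and R22^♯(Y) ≺ 0, then R22^♯(X) ⪯ R22^♯(Y) ≺ 0. (Monotonicity of the Schur complement sign condition: the Schur complement map Z ↦ R22^♯(Z) is matrix-monotone nondecreasing on {Z : R22(Z) ≻ 0}.) -/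

import Mathlib

set_option maxHeartbeats 1000000


open Matrix

lemma sum_fromBlocks' {r m1 m2 : ℕ}
    (A : Fin r → Matrix (Fin m1) (Fin m1) ℝ) (B : Fin r → Matrix (Fin m1) (Fin m2) ℝ)
    (C : Fin r → Matrix (Fin m2) (Fin m1) ℝ) (D : Fin r → Matrix (Fin m2) (Fin m2) ℝ) :
    ∑ k, fromBlocks (A k) (B k) (C k) (D k)
      = fromBlocks (∑ k, A k) (∑ k, B k) (∑ k, C k) (∑ k, D k) := by
  ext (i | i) (j | j) <;> simp [Matrix.sum_apply, fromBlocks]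

/-- Monotonicity of the Schur complement: if `X ⪯ Y`, `R22(X) ≻ 0`, `R22(Y) ≻ 0` and
`R22♯(Y) ≺ 0`, then `R22♯(X) ⪯ R22♯(Y) ≺ 0`. -/
theorem stmt_9 {n m1 m2 r : ℕ}
    (R11 : Matrix (Fin m1) (Fin m1) ℝ) (R12 : Matrix (Fin m1) (Fin m2) ℝ)
    (R22 : Matrix (Fin m2) (Fin m2) ℝ) (hR11 : R11.IsSymm) (hR22 : R22.IsSymm)
    (B1 : Fin r → Matrix (Fin n) (Fin m1) ℝ) (B2 : Fin r → Matrix (Fin n) (Fin m2) ℝ)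
    (X Y : Matrix (Fin n) (Fin n) ℝ) (hX : X.IsSymm) (hY : Y.IsSymm)
    (hXY : (Y - X).PosSemidef) :
    let R11f : Matrix (Fin n) (Fin n) ℝ → Matrix (Fin m1) (Fin m1) ℝ :=
      fun Z => R11 + ∑ k, (B1 k)ᵀ * Z * B1 k
    let R12f : Matrix (Fin n) (Fin n) ℝ → Matrix (Fin m1) (Fin m2) ℝ :=
      fun Z => R12 + ∑ k, (B1 k)ᵀ * Z * B2 k
    let R22f : Matrix (Fin n) (Fin n) ℝ → Matrix (Fin m2) (Fin m2) ℝ :=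
      fun Z => R22 + ∑ k, (B2 k)ᵀ * Z * B2 k
    let Rsharp : Matrix (Fin n) (Fin n) ℝ → Matrix (Fin m1) (Fin m1) ℝ :=
      fun Z => R11f Z - R12f Z * (R22f Z)⁻¹ * (R12f Z)ᵀ
    (R22f X).PosDef → (R22f Y).PosDef → (-(Rsharp Y)).PosDef →
      (Rsharp Y - Rsharp X).PosSemidef ∧ (-(Rsharp X)).PosDef := by
  intro R11f R12f R22f Rsharp hRX hRY hRsY
  haveI := hRX.isUnit.invertible
  haveI := hRY.isUnit.invertible
  have hsym : (Y - X)ᵀ = Y - X := hY.sub hX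
  -- block equalities
  have b11 : R11f Y - R11f X = ∑ k, (B1 k)ᵀ * (Y - X) * B1 k := by
    simp only [R11f, Matrix.mul_sub, Matrix.sub_mul, Finset.sum_sub_distrib]
    abel
  have b12 : R12f Y - R12f X = ∑ k, (B1 k)ᵀ * (Y - X) * B2 k := by
    simp only [R12f, Matrix.mul_sub, Matrix.sub_mul, Finset.sum_sub_distrib]
    abel
  have b22 : R22f Y - R22f X = ∑ k, (B2 k)ᵀ * (Y - X) * B2 k := by
    simp only [R22f, Matrix.mul_sub, Matrix.sub_mul, Finset.sum_sub_distrib]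
    abel
  have b21 : (R12f Y)ᴴ - (R12f X)ᴴ = ∑ k, (B2 k)ᵀ * (Y - X) * B1 k := by
    simp only [Matrix.conjTranspose_eq_transpose_of_trivial]
    rw [← Matrix.transpose_sub, b12, Matrix.transpose_sum]
    refine Finset.sum_congr rfl fun k _ => ?_
    rw [Matrix.transpose_mul, Matrix.transpose_mul, Matrix.transpose_transpose, hsym,
      Matrix.mul_assoc]
  have hP : (fromBlocks (R11f X - Rsharp X) (R12f X) (R12f X)ᴴ (R22f X)).PosSemidef := by
    rw [Matrix.PosDef.fromBlocks₂₂ _ _ hRX]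
    have h0 : R11f X - Rsharp X - R12f X * (R22f X)⁻¹ * (R12f X)ᴴ = 0 := by
      simp only [Rsharp, Matrix.conjTranspose_eq_transpose_of_trivial]
      abel
    rw [h0]
    exact Matrix.PosSemidef.zero
  have hQ : (fromBlocks (R11f Y - R11f X) (R12f Y - R12f X)
      ((R12f Y)ᴴ - (R12f X)ᴴ) (R22f Y - R22f X)).PosSemidef := by
    have term : ∀ k : Fin r, (fromCols (B1 k) (B2 k))ᴴ * (Y - X) * fromCols (B1 k) (B2 k)
        = fromBlocks ((B1 k)ᵀ * (Y - X) * B1 k) ((B1 k)ᵀ * (Y - X) * B2 k)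
            ((B2 k)ᵀ * (Y - X) * B1 k) ((B2 k)ᵀ * (Y - X) * B2 k) := by
      intro k
      rw [Matrix.conjTranspose_eq_transpose_of_trivial, transpose_fromCols, fromRows_mul,
        fromRows_mul_fromCols]
    have key : fromBlocks (R11f Y - R11f X) (R12f Y - R12f X)
        ((R12f Y)ᴴ - (R12f X)ᴴ) (R22f Y - R22f X)
        = ∑ k, (fromCols (B1 k) (B2 k))ᴴ * (Y - X) * fromCols (B1 k) (B2 k) := by
      simp only [term, sum_fromBlocks']
      rw [b11, b12, b21, b22]
    rw [key]
    apply Finset.sum_induction _ _ (fun a b ha hb => ha.add hb) Matrix.PosSemidef.zero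
    intro k _
    exact hXY.conjTranspose_mul_mul_same _
  have hN : (fromBlocks (R11f Y - Rsharp X) (R12f Y) (R12f Y)ᴴ (R22f Y)).PosSemidef := by
    have e : fromBlocks (R11f Y - Rsharp X) (R12f Y) (R12f Y)ᴴ (R22f Y)
        = fromBlocks (R11f X - Rsharp X) (R12f X) (R12f X)ᴴ (R22f X)
          + fromBlocks (R11f Y - R11f X) (R12f Y - R12f X)
              ((R12f Y)ᴴ - (R12f X)ᴴ) (R22f Y - R22f X) := by
      rw [Matrix.fromBlocks_add]
      have e1 : R11f X - Rsharp X + (R11f Y - R11f X) = R11f Y - Rsharp X := by abel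
      have e2 : R12f X + (R12f Y - R12f X) = R12f Y := by abel
      have e3 : (R12f X)ᴴ + ((R12f Y)ᴴ - (R12f X)ᴴ) = (R12f Y)ᴴ := by abel
      have e4 : R22f X + (R22f Y - R22f X) = R22f Y := by abel
      rw [e1, e2, e3, e4]
    rw [e]
    exact hP.add hQ
  have h1 : (Rsharp Y - Rsharp X).PosSemidef := by
    have h2 := (Matrix.PosDef.fromBlocks₂₂ _ _ hRY).mp hN
    have e : R11f Y - Rsharp X - R12f Y * (R22f Y)⁻¹ * (R12f Y)ᴴ = Rsharp Y - Rsharp X := by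
      simp only [Rsharp, Matrix.conjTranspose_eq_transpose_of_trivial]
      abel
    rwa [e] at h2
  refine ⟨h1, ?_⟩
  have e : -(Rsharp X) = -(Rsharp Y) + (Rsharp Y - Rsharp X) := by abel
  rw [e]
  exact hRsY.add_posSemidef h1
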